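/- If δ ⊂ γ are (k+1)-cores with |𝔭(γ)| = |𝔭(δ)| + 1 and γ/δ is a union of horizontal ribbons whose highest component lies in row i, then 𝔭(γ) = 𝔭(δ) + e_i, i.e., the k-bounded partitions associated to γ and δ agree in all rows except row i, where they differ by exactly one. -/

import Mathlib

open scoped Classical

namespace KSchur

noncomputable section

/-! Partitions as weakly decreasing, eventually-zero functions `ℕ → ℕ`
(rows indexed from 0; row 0 is the bottom row, as in the paper). -/

def IsPartitionFun (f : ℕ → ℕ) : Prop :=
  (∀ ⦃i j : ℕ⦄, i ≤ j → f j ≤ f i) ∧ ∃ N, f N = 0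

def IsKBounded (k : ℕ) (f : ℕ → ℕ) : Prop := ∀ i, f i ≤ k

/-- the number of cells of a partition -/
def sizeP (f : ℕ → ℕ) : ℕ := Nat.card {p : ℕ × ℕ | p.2 < f p.1}

/-- column lengths (the conjugate partition) -/
def colLen (f : ℕ → ℕ) (j : ℕ) : ℕ := Nat.card {i : ℕ | j < f i}

/-- hook length of the (0-indexed) cell `(i,j)` -/
def hookLen (f : ℕ → ℕ) (i j : ℕ) : ℕ := (f i - j) + (colLen f j - i) - 1

/-- an `n`-core: no cell has hook length `n` -/
def IsCore (n : ℕ) (f : ℕ → ℕ) : Prop := ∀ i j, j < f i → hookLen f i j ≠ n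

/-- the `(k+1)`-residue of the cell `(i,j)` -/
def resid (k : ℕ) (i j : ℕ) : ZMod (k + 1) := (j : ZMod (k + 1)) - (i : ZMod (k + 1))

def Extremal (f : ℕ → ℕ) (i j : ℕ) : Prop := j < f i ∧ ¬ (j + 1 < f (i + 1))

def Removable (f : ℕ → ℕ) (i j : ℕ) : Prop := j < f i ∧ f i = j + 1 ∧ f (i + 1) ≤ j

def Addable (f : ℕ → ℕ) (i j : ℕ) : Prop := j = f i ∧ (i = 0 ∨ f i < f (i - 1))

/-- the number of `k`-bounded cells (hook length at most `k`) in row `i` -/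
def rowCount (k : ℕ) (f : ℕ → ℕ) (i : ℕ) : ℕ :=
  Nat.card {j : ℕ | j < f i ∧ hookLen f i j ≤ k}

/-- the map `𝔭` from `(k+1)`-cores to `k`-bounded partitions -/
def pmapFun (k : ℕ) (f : ℕ → ℕ) : ℕ → ℕ := rowCount k f

/-- the total number of `k`-bounded cells -/
def kBoundedCount (k : ℕ) (f : ℕ → ℕ) : ℕ :=
  Nat.card {p : ℕ × ℕ | p.2 < f p.1 ∧ hookLen f p.1 p.2 ≤ k}

/-- the map `𝔠`, inverse of `𝔭` -/
def cmap (k : ℕ) (lam : ℕ → ℕ) : ℕ → ℕ :=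
  if h : ∃ g, IsPartitionFun g ∧ IsCore (k + 1) g ∧ pmapFun k g = lam then h.choose
  else fun _ => 0

/-! The action of the affine symmetric group generators `σ_i` on `(k+1)`-cores:
remove all removable corners of residue `i` if there is one, otherwise add all
addable corners of residue `i` if there is one. -/

def RemRowRes (k : ℕ) (f : ℕ → ℕ) (a : ℕ) (i : ZMod (k + 1)) : Prop :=
  0 < f a ∧ f (a + 1) < f a ∧ resid k a (f a - 1) = i

def AddRowRes (k : ℕ) (f : ℕ → ℕ) (a : ℕ) (i : ZMod (k + 1)) : Prop :=
  (a = 0 ∨ f a < f (a - 1)) ∧ resid k a (f a) = i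

def coreAct (k : ℕ) (i : ZMod (k + 1)) (f : ℕ → ℕ) : ℕ → ℕ :=
  if ∃ a, RemRowRes k f a i then fun a => if RemRowRes k f a i then f a - 1 else f a
  else if ∃ a, AddRowRes k f a i then fun a => if AddRowRes k f a i then f a + 1 else f a
  else f

/-- action of a word in the generators (rightmost letter acts first) -/
def wordActZM (k : ℕ) (L : List (ZMod (k + 1))) (f : ℕ → ℕ) : ℕ → ℕ :=
  L.foldr (fun i g => coreAct k i g) f

def wordActZ (k : ℕ) (L : List ℤ) (f : ℕ → ℕ) : ℕ → ℕ :=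
  wordActZM k (L.map fun t => ((t : ℤ) : ZMod (k + 1))) f

/-- the word `σ_r σ_{r+1} ⋯ σ_{s-2} σ_{s-1} σ_{s-2} ⋯ σ_{r+1} σ_r` (as a list of integers,
read left to right) -/
def trsList (r s : ℤ) : List ℤ :=
  ((List.range (s - r).toNat).map fun t => r + t) ++
    (((List.range ((s - r).toNat - 1)).map fun t => r + t).reverse)

/-- action of the transposition `t_{r,s}` on `(k+1)`-cores -/
def trsAct (k : ℕ) (r s : ℤ) (f : ℕ → ℕ) : ℕ → ℕ := wordActZ k (trsList r s) f

/-! `σ_A` for a subset `A ⊆ ℤ_{k+1}`: the product, over the maximal cyclic components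
`[a,b]` of `A`, of `σ_b σ_{b-1} ⋯ σ_a`. -/

/-- the length of the maximal cyclic run of `A` starting at `a` -/
def runLen (k : ℕ) (A : Finset (ZMod (k + 1))) (a : ZMod (k + 1)) : ℕ :=
  if h : ∃ m : ℕ, a + ((m + 1 : ℕ) : ZMod (k + 1)) ∉ A then Nat.find h + 1 else 0

/-- the word `σ_{a+m-1} ⋯ σ_{a+1} σ_a` for the cyclic component of `A` starting at `a` -/
def compWord (k : ℕ) (A : Finset (ZMod (k + 1))) (a : ZMod (k + 1)) : List (ZMod (k + 1)) :=
  ((List.range (runLen k A a)).map fun t => a + (t : ℕ)).reverse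

/-- the action of `σ_A` on `(k+1)`-cores (the cyclic components commute; we compose
them in increasing order of the representative of their starting residue) -/
def sigmaSet (k : ℕ) (A : Finset (ZMod (k + 1))) (f : ℕ → ℕ) : ℕ → ℕ :=
  wordActZM k
    (((((A.filter fun a => a - 1 ∉ A).image fun a => ZMod.val a).sort (· ≤ ·)).map
        fun av => compWord k A ((av : ℕ) : ZMod (k + 1))).flatten) f

/-! Vertical `(k,ℓ)`-strips. -/

/-- `f/g` is a (disjoint) union of horizontal ribbons: no two cells of the skew diagram
are vertically adjacent -/
def HorizRibbons (f g : ℕ → ℕ) : Prop :=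
  (∀ a, g a ≤ f a) ∧
    ∀ a b, (g a ≤ b ∧ b < f a) → ¬(g (a + 1) ≤ b ∧ b < f (a + 1))

/-- `g ⋖ f` with `f/g` a union of horizontal ribbons whose lowest component is in row `rr` -/
def CoverHoriz (k : ℕ) (f g : ℕ → ℕ) (rr : ℕ) : Prop :=
  IsPartitionFun g ∧ IsCore (k + 1) g ∧
    kBoundedCount k f = kBoundedCount k g + 1 ∧ HorizRibbons f g ∧
    g rr < f rr ∧ ∀ a < rr, f a = g a

/-- the number of rows of the main subpartition of `ghat` (relative to `g`) -/
def mainLen (k : ℕ) (g ghat : ℕ → ℕ) : ℕ :=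
  Nat.card {a : ℕ | g 0 - rowCount k g 0 < ghat a}

def VertStripChain (k l : ℕ) (g ghat δ : ℕ → ℕ) (w : ℕ → ℕ → ℕ) (r : ℕ → ℕ) : Prop :=
  w 0 = ghat ∧ w l = δ ∧ (∀ i < l, CoverHoriz k (w i) (w (i + 1)) (r i)) ∧
    (∀ i < l, r i < mainLen k g ghat) ∧
    ∀ i j, i < l → j < l → r i = r j → i = j

/-- `δ` is obtained from `ghat` by removing a vertical `(k,ℓ)`-strip
(`ghat` being the truncated core of the core `g`) -/
def RemVertStrip (k l : ℕ) (g ghat δ : ℕ → ℕ) : Prop :=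
  ∃ w r, VertStripChain k l g ghat δ w r

/-- `γ̂` : the core of `𝔭(γ)` with its first part removed -/
def hatCore (k : ℕ) (g : ℕ → ℕ) : ℕ → ℕ := cmap k fun i => rowCount k g (i + 1)

/-! OX diagrams, the sets `𝒟` and `𝒞`, changeable cells. -/

def DSet (k : ℕ) (lam : ℕ → ℕ) : Set ((ℕ → ℕ) × Finset (ZMod (k + 1))) :=
  {p | ∃ l ≤ k - lam 0,
      RemVertStrip k l (cmap k lam) (hatCore k (cmap k lam)) p.1 ∧
      p.2.card = lam 0 + l ∧ kBoundedCount k (sigmaSet k p.2 p.1) = sizeP lam}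

/-- a changeable cell of `(δ, A)`: a cell of `σ_A(δ)` at the top of its column and
belonging to `γ̂` -/
def IsChangeable (k : ℕ) (lam δ : ℕ → ℕ) (A : Finset (ZMod (k + 1))) (c : ℕ × ℕ) : Prop :=
  c.2 < sigmaSet k A δ c.1 ∧ sigmaSet k A δ (c.1 + 1) ≤ c.2 ∧
    c.2 < hatCore k (cmap k lam) c.1

def CSet (k : ℕ) (lam : ℕ → ℕ) : Set ((ℕ → ℕ) × Finset (ZMod (k + 1))) :=
  {p | p ∈ DSet k lam ∧ ∃ c, IsChangeable k lam p.1 p.2 c}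

/-- an O cell of the OX diagram of `(δ, A)`: a cell of `γ̂/δ` -/
def IsOCell (k : ℕ) (lam δ : ℕ → ℕ) (c : ℕ × ℕ) : Prop :=
  δ c.1 ≤ c.2 ∧ c.2 < hatCore k (cmap k lam) c.1

/-- an OX cell: a cell of `γ̂/δ` that is also a cell of `σ_A(δ)/δ` -/
def IsOXCell (k : ℕ) (lam δ : ℕ → ℕ) (A : Finset (ZMod (k + 1))) (c : ℕ × ℕ) : Prop :=
  δ c.1 ≤ c.2 ∧ c.2 < hatCore k (cmap k lam) c.1 ∧ c.2 < sigmaSet k A δ c.1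

/-- the rightmost changeable cell of `(δ, A)` -/
def rcc (k : ℕ) (lam δ : ℕ → ℕ) (A : Finset (ZMod (k + 1))) : ℕ × ℕ :=
  if h : ∃ c, IsChangeable k lam δ A c ∧ ∀ c', IsChangeable k lam δ A c' → c'.2 ≤ c.2 then
    h.choose
  else (0, 0)

/-- the column of the leftmost OX cell in row `a` -/
def loxCol (k : ℕ) (lam δ : ℕ → ℕ) (A : Finset (ZMod (k + 1))) (a : ℕ) : ℕ :=
  if h : ∃ b, IsOXCell k lam δ A (a, b) then Nat.find h else 0

/-- the column of the leftmost changeable cell `b'` in row `a` all of whose residues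
between that of `(a,b')` (inclusive) and that of `(a,b)` (exclusive) lie in `A` -/
def caseIICol (k : ℕ) (lam δ : ℕ → ℕ) (A : Finset (ZMod (k + 1))) (a b : ℕ) : ℕ :=
  if h : ∃ b', IsChangeable k lam δ A (a, b') ∧
      ∀ t : ℤ, (b' : ℤ) - (a : ℤ) ≤ t → t < (b : ℤ) - (a : ℤ) →
        ((t : ℤ) : ZMod (k + 1)) ∈ A then
    Nat.find h
  else b

/-- the involution `φ` of the paper -/
def phiInv (k : ℕ) (lam : ℕ → ℕ) (p : (ℕ → ℕ) × Finset (ZMod (k + 1))) :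
    (ℕ → ℕ) × Finset (ZMod (k + 1)) :=
  let δ := p.1
  let A := p.2
  let c := rcc k lam δ A
  if IsOXCell k lam δ A c then
    (trsAct k ((loxCol k lam δ A c.1 : ℤ) - (c.1 : ℤ)) ((c.2 : ℤ) - (c.1 : ℤ) + 1) δ,
      A.erase (resid k c.1 c.2))
  else
    (trsAct k ((caseIICol k lam δ A c.1 c.2 : ℤ) - (c.1 : ℤ)) ((c.2 : ℤ) - (c.1 : ℤ) + 1) δ,
      insert (resid k c.1 c.2) A)

/-! Skew diagrams, connectivity, ribbons. -/

def skewSet (g δ : ℕ → ℕ) : Set (ℕ × ℕ) := {p | δ p.1 ≤ p.2 ∧ p.2 < g p.1}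

def adjCell (p q : ℕ × ℕ) : Prop :=
  (p.1 = q.1 ∧ (p.2 + 1 = q.2 ∨ q.2 + 1 = p.2)) ∨
    (p.2 = q.2 ∧ (p.1 + 1 = q.1 ∨ q.1 + 1 = p.1))

def connIn (S : Set (ℕ × ℕ)) (p q : ℕ × ℕ) : Prop :=
  Relation.ReflTransGen (fun x y => adjCell x y ∧ x ∈ S ∧ y ∈ S) p q

/-- the connected component of `p` in `S` -/
def compOf (S : Set (ℕ × ℕ)) (p : ℕ × ℕ) : Set (ℕ × ℕ) := {q | q ∈ S ∧ connIn S p q}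

/-- the head (southeast-most cell, i.e. the cell of maximal content) of the
component of `q` -/
def IsHead (S : Set (ℕ × ℕ)) (q : ℕ × ℕ) : Prop :=
  q ∈ S ∧ ∀ p ∈ S, connIn S q p → (p.2 : ℤ) - (p.1 : ℤ) ≤ (q.2 : ℤ) - (q.1 : ℤ)

/-! A model of the ring of symmetric functions: coefficient functions in the Schur
basis.  `schurB lam` is the Schur function `s_lam`. -/

abbrev SymF := (ℕ → ℕ) → ℤ

def schurB (lam : ℕ → ℕ) : SymF := fun μ => if μ = lam then 1 else 0

/-- the Hall inner product (Schur functions are orthonormal) -/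
def hallIP (f g : SymF) : ℤ := ∑ᶠ lam, f lam * g lam

/-- `lam/μ` is a vertical `m`-strip -/
def IsVStrip (μ lam : ℕ → ℕ) (m : ℕ) : Prop :=
  (∀ i, μ i ≤ lam i) ∧ (∀ i, lam i - μ i ≤ 1) ∧ sizeP lam = sizeP μ + m

/-- `lam/μ` is a horizontal `m`-strip -/
def IsHStrip (μ lam : ℕ → ℕ) (m : ℕ) : Prop :=
  (∀ i, μ i ≤ lam i) ∧ (∀ i, lam (i + 1) ≤ μ i) ∧ sizeP lam = sizeP μ + m

/-- multiplication by the elementary symmetric function `e_m` (Pieri rule) -/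
def mulE (m : ℕ) (f : SymF) : SymF := fun μ =>
  if IsPartitionFun μ then ∑ᶠ lam ∈ {lam | IsPartitionFun lam ∧ IsVStrip lam μ m}, f lam
  else 0

/-- multiplication by the complete homogeneous symmetric function `h_m` (Pieri rule) -/
def mulH (m : ℕ) (f : SymF) : SymF := fun μ =>
  if IsPartitionFun μ then ∑ᶠ lam ∈ {lam | IsPartitionFun lam ∧ IsHStrip lam μ m}, f lam
  else 0

/-- the operator `e_m^⊥` -/
def eperp (m : ℕ) (f : SymF) : SymF := fun μ =>
  if IsPartitionFun μ then ∑ᶠ lam ∈ {lam | IsPartitionFun lam ∧ IsVStrip μ lam m}, f lam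
  else 0

/-- the Bernstein operator `B_n = Σ_{i ≥ 0} (-1)^i h_{n+i} e_i^⊥` -/
def Bop (n : ℕ) (f : SymF) : SymF := fun μ =>
  ∑ᶠ i : ℕ, (-1 : ℤ) ^ i * mulH (n + i) (eperp i f) μ

/-! The affine symmetric group by its Coxeter presentation. -/

def coxRels (k : ℕ) : Set (FreeGroup (ZMod (k + 1))) :=
  {w | (∃ i : ZMod (k + 1), w = FreeGroup.of i * FreeGroup.of i) ∨
    (∃ i : ZMod (k + 1),
      w = FreeGroup.of i * FreeGroup.of (i + 1) * FreeGroup.of i *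
        (FreeGroup.of (i + 1) * FreeGroup.of i * FreeGroup.of (i + 1))⁻¹) ∨
    ∃ i j : ZMod (k + 1), i - j ≠ 1 ∧ j - i ≠ 1 ∧
      w = FreeGroup.of i * FreeGroup.of j * (FreeGroup.of j * FreeGroup.of i)⁻¹}

/-- the generator `σ_t` (for an integer `t`, read modulo `k+1`) -/
def sigmaGen (k : ℕ) (t : ℤ) : PresentedGroup (coxRels k) :=
  PresentedGroup.of ((t : ℤ) : ZMod (k + 1))

/-- the transposition `t_{r,s} = σ_r σ_{r+1} ⋯ σ_{s-2} σ_{s-1} σ_{s-2} ⋯ σ_{r+1} σ_r` -/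
def trsElt (k : ℕ) (r s : ℤ) : PresentedGroup (coxRels k) :=
  ((trsList r s).map (sigmaGen k)).prod

/-! The `k`-Schur functions at `t = 1`, via the triangular system defining them in
terms of the complete homogeneous symmetric functions.  We model the ring
`Λ = ℤ[h₁, h₂, …]` as the polynomial ring `MvPolynomial ℕ ℤ`, `X m` standing for
`h_m`. -/

def hMono (lam : ℕ → ℕ) : MvPolynomial ℕ ℤ :=
  ∏ᶠ i : ℕ, if lam i = 0 then 1 else MvPolynomial.X (lam i)

def numParts (f : ℕ → ℕ) : ℕ := Nat.card {i : ℕ | f i ≠ 0}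

/-- `T` is a `k`-tableau of shape the `(k+1)`-core `g` and `k`-weight `α` -/
def IsKTableau (k : ℕ) (g α : ℕ → ℕ) (T : ℕ × ℕ → ℕ) : Prop :=
  (∀ p : ℕ × ℕ, ¬p.2 < g p.1 → T p = 0) ∧
    (∀ a b, b < g a → 1 ≤ T (a, b) ∧ T (a, b) ≤ numParts α) ∧
    (∀ a b b', b ≤ b' → b' < g a → T (a, b) ≤ T (a, b')) ∧
    (∀ a a' b, a < a' → b < g a' → T (a, b) < T (a', b)) ∧
    ∀ m, 1 ≤ m → m ≤ numParts α →
      Nat.card {ρ : ZMod (k + 1) | ∃ a b, b < g a ∧ T (a, b) = m ∧ resid k a b = ρ} = α (m - 1)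

/-- the `k`-Kostka number `K^{(k)}_{μ lam}` -/
def Kcoef (k : ℕ) (μ lam : ℕ → ℕ) : ℕ :=
  Nat.card {x : (ℕ → ℕ) × (ℕ × ℕ → ℕ) //
    IsPartitionFun x.1 ∧ IsCore (k + 1) x.1 ∧ pmapFun k x.1 = μ ∧ IsKTableau k x.1 lam x.2}

/-- `s` is the family of `k`-Schur functions (at `t = 1`):
`h_lam = Σ_μ K^{(k)}_{μ lam} s_μ` for all `k`-bounded partitions `lam` -/
def IsKSchurFamily (k : ℕ) (s : (ℕ → ℕ) → MvPolynomial ℕ ℤ) : Prop :=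
  ∀ lam : ℕ → ℕ, IsPartitionFun lam → IsKBounded k lam →
    hMono lam =
      ∑ᶠ μ ∈ {μ : ℕ → ℕ | IsPartitionFun μ ∧ IsKBounded k μ ∧ sizeP μ = sizeP lam},
        (Kcoef k μ lam : ℤ) • s μ

/-- the sequences `S = (γ⁽⁰⁾, …, γ⁽ʳ⁾)` of Corollary: encoded as `(r, G, L)` where
`γ⁽ⁱ⁾ = G i` and `ℓ_{i+1} = L i`. -/
def SeqSet (k : ℕ) (g : ℕ → ℕ) : Set (ℕ × (ℕ → ℕ → ℕ) × (ℕ → ℕ)) :=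
  {x | x.2.1 0 = (fun _ => 0) ∧ x.2.1 x.1 = g ∧
    (∀ i, x.1 ≤ i → x.2.1 i = g ∧ x.2.2 i = 0) ∧
    ∀ i < x.1,
      IsPartitionFun (x.2.1 (i + 1)) ∧ IsCore (k + 1) (x.2.1 (i + 1)) ∧
        (∀ a, x.2.1 i a ≤ x.2.1 (i + 1) a) ∧ x.2.1 i ≠ x.2.1 (i + 1) ∧ x.2.2 i ≤ k ∧
        RemVertStrip k (x.2.2 i) (x.2.1 (i + 1)) (hatCore k (x.2.1 (i + 1))) (x.2.1 i)}


/-! ### Auxiliary lemmas for Statement 12 -/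

private lemma lDown {f : ℕ → ℕ} (hf : IsPartitionFun f) (a j : ℕ) :
    j < f a ↔ a < colLen f j := by
  obtain ⟨hmono, N, hN⟩ := hf
  have hcne : ({i : ℕ | j < f i})ᶜ.Nonempty :=
    ⟨N, by simp only [Set.mem_compl_iff, Set.mem_setOf_eq]; omega⟩
  set n := sInf ({i : ℕ | j < f i})ᶜ with hn
  have hnS : n ∈ ({i : ℕ | j < f i})ᶜ := Nat.sInf_mem hcne
  simp only [Set.mem_compl_iff, Set.mem_setOf_eq] at hnS
  have hIio : {i : ℕ | j < f i} = Set.Iio n := by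
    ext m
    simp only [Set.mem_setOf_eq, Set.mem_Iio]
    constructor
    · intro hm
      by_contra hmn
      push_neg at hmn
      have := hmono hmn
      omega
    · intro hm
      by_contra hmS
      have : n ≤ m := Nat.sInf_le (by simpa using hmS)
      omega
  have hcol : colLen f j = n := by
    rw [colLen, Nat.card_coe_set_eq, hIio]
    have h2 : Set.Iio n = ↑(Finset.range n) := by ext m; simp
    rw [h2, Set.ncard_coe_finset, Finset.card_range]
  have hmem : j < f a ↔ a < n := by
    have h3 : a ∈ {i : ℕ | j < f i} ↔ a ∈ Set.Iio n := by rw [hIio]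
    simpa using h3
  rw [hcol]; exact hmem

private lemma lCmono {f : ℕ → ℕ} (hf : IsPartitionFun f) {j j' : ℕ} (h : j ≤ j') :
    colLen f j' ≤ colLen f j := by
  by_contra hc
  push_neg at hc
  have h2 : j' < f (colLen f j) := (lDown hf _ _).mpr hc
  have h3 : j < f (colLen f j) := by omega
  have := (lDown hf (colLen f j) j).mp h3
  omega

private lemma lHook {f : ℕ → ℕ} (hf : IsPartitionFun f) {a j : ℕ} (h : j < f a) :
    hookLen f a j + j + a + 1 = f a + colLen f j := by
  have h2 := (lDown hf a j).mp h
  unfold hookLen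
  omega

private lemma lHookPos {f : ℕ → ℕ} (hf : IsPartitionFun f) {a j : ℕ} (h : j < f a) :
    1 ≤ hookLen f a j := by
  have h2 := (lDown hf a j).mp h
  have := lHook hf h
  omega

private lemma lMono {f : ℕ → ℕ} (hf : IsPartitionFun f) {a j j' : ℕ} (hjj : j ≤ j')
    (hj' : j' < f a) : hookLen f a j' + j' ≤ hookLen f a j + j := by
  have hj : j < f a := by omega
  have e1 := lHook hf hj
  have e2 := lHook hf hj'
  have := lCmono hf hjj (f := f)
  omega

private lemma lGd {d g : ℕ → ℕ} (hhor : HorizRibbons g d) (hd : IsPartitionFun d) {a : ℕ}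
    (ha : d a < g a) : g (a + 1) ≤ d a := by
  by_contra h
  push_neg at h
  exact hhor.2 a (d a) ⟨le_refl _, ha⟩ ⟨hd.1 (Nat.le_succ a), h⟩

private lemma lNewcol {d g : ℕ → ℕ} (hhor : HorizRibbons g d) (hd : IsPartitionFun d)
    (hg : IsPartitionFun g) {a b : ℕ} (h1 : d a ≤ b) (h2 : b < g a) :
    colLen g b = a + 1 := by
  have hlt : a < colLen g b := (lDown hg a b).mp h2
  have h3 : ¬ (b < g (a + 1)) := by
    have := lGd hhor hd (lt_of_le_of_lt h1 h2)
    omega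
  have h4 : ¬ (a + 1 < colLen g b) := fun hc => h3 ((lDown hg _ _).mpr hc)
  omega

private lemma lRk {k : ℕ} {d g : ℕ → ℕ} (hhor : HorizRibbons g d) (hd : IsPartitionFun d)
    (hg : IsPartitionFun g) (hgc : IsCore (k + 1) g) {a : ℕ} (ha : d a < g a) :
    g a - d a ≤ k := by
  by_contra h
  push_neg at h
  set b := g a - (k + 1) with hb
  have hb1 : d a ≤ b := by omega
  have hb2 : b < g a := by omega
  have hc := lNewcol hhor hd hg hb1 hb2
  have he := lHook hg hb2
  exact hgc a b hb2 (by omega)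

private lemma lNewHook {k : ℕ} {d g : ℕ → ℕ} (hhor : HorizRibbons g d) (hd : IsPartitionFun d)
    (hg : IsPartitionFun g) (hgc : IsCore (k + 1) g) {a b : ℕ} (h1 : d a ≤ b) (h2 : b < g a) :
    hookLen g a b ≤ k := by
  have hc := lNewcol hhor hd hg h1 h2
  have he := lHook hg h2
  have hr := lRk hhor hd hg hgc (lt_of_le_of_lt h1 h2)
  omega

private lemma lC2 {d g : ℕ → ℕ} (hhor : HorizRibbons g d) (hd : IsPartitionFun d)
    (hg : IsPartitionFun g) (j : ℕ) : colLen g j ≤ colLen d j + 1 := by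
  by_contra h
  push_neg at h
  set a := colLen d j with ha
  have hga : j < g a := (lDown hg _ _).mpr (by omega)
  have hga1 : j < g (a + 1) := (lDown hg _ _).mpr (by omega)
  have hda : d a ≤ j := by
    by_contra hh
    push_neg at hh
    have := (lDown hd a j).mp hh
    omega
  have hda1 : d (a + 1) ≤ d a := hd.1 (Nat.le_succ a)
  exact hhor.2 a j ⟨hda, hga⟩ ⟨by omega, hga1⟩

private lemma lC1 {d g : ℕ → ℕ} (hhor : HorizRibbons g d) (hd : IsPartitionFun d)
    (hg : IsPartitionFun g) (j : ℕ) : colLen d j ≤ colLen g j := by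
  by_contra h
  push_neg at h
  have h2 : j < d (colLen g j) := (lDown hd _ _).mpr h
  have h3 : j < g (colLen g j) := lt_of_lt_of_le h2 (hhor.1 _)
  have := (lDown hg _ _).mp h3
  omega

private lemma lC3 {d g : ℕ → ℕ} (hhor : HorizRibbons g d) (hd : IsPartitionFun d)
    (hg : IsPartitionFun g) {i : ℕ} (htop : ∀ a, i < a → g a = d a) {j : ℕ}
    (hj : j < d i) : colLen g j = colLen d j := by
  refine le_antisymm ?_ (lC1 hhor hd hg j)
  by_contra h
  push_neg at h
  set a := colLen d j with ha
  have hga : j < g a := (lDown hg _ _).mpr (by omega)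
  have hda : d a ≤ j := by
    by_contra hh
    push_neg at hh
    have := (lDown hd a j).mp hh
    omega
  have hia : i < a := by
    by_contra hh
    push_neg at hh
    have := hd.1 hh
    omega
  have := htop a hia
  omega

private lemma rowCount_eq_ncard (k : ℕ) (f : ℕ → ℕ) (a : ℕ) :
    rowCount k f a = {j : ℕ | j < f a ∧ hookLen f a j ≤ k}.ncard := by
  rw [rowCount, Nat.card_coe_set_eq]

private lemma lRowZero (k : ℕ) {f : ℕ → ℕ} {a : ℕ} (hfa : f a = 0) : rowCount k f a = 0 := by
  have h : {j : ℕ | j < f a ∧ hookLen f a j ≤ k} = ∅ := by ext j; simp [hfa]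
  rw [rowCount_eq_ncard, h, Set.ncard_empty]

private lemma lArow {k : ℕ} {d g : ℕ → ℕ} (hd : IsPartitionFun d) (hg : IsPartitionFun g)
    (hgc : IsCore (k + 1) g) (hhor : HorizRibbons g d) (a : ℕ) :
    rowCount k d a ≤ rowCount k g a := by
  set r := g a - d a with hr
  have hdg : d a ≤ g a := hhor.1 a
  have hsub : (fun j => j + r) '' {j : ℕ | j < d a ∧ hookLen d a j ≤ k}
      ⊆ {j : ℕ | j < g a ∧ hookLen g a j ≤ k} := by
    rintro x ⟨j, ⟨hj1, hj2⟩, rfl⟩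
    have hx1 : j + r < g a := by omega
    refine ⟨hx1, ?_⟩
    show hookLen g a (j + r) ≤ k
    by_cases hcase : j + r < d a
    · have hmono := lMono hd (Nat.le_add_right j r) hcase
      have hed := lHook hd hcase
      have heg := lHook hg hx1
      have hc2 := lC2 hhor hd hg (j + r)
      have hne : hookLen g a (j + r) ≠ k + 1 := hgc a (j + r) hx1
      omega
    · push_neg at hcase
      exact lNewHook hhor hd hg hgc hcase hx1
  have hfinBg : {j : ℕ | j < g a ∧ hookLen g a j ≤ k}.Finite :=
    (Set.finite_Iio (g a)).subset fun x hx => hx.1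
  calc rowCount k d a = {j : ℕ | j < d a ∧ hookLen d a j ≤ k}.ncard :=
        rowCount_eq_ncard k d a
    _ = ((fun j => j + r) '' {j : ℕ | j < d a ∧ hookLen d a j ≤ k}).ncard :=
        (Set.ncard_image_of_injective _ (add_left_injective r)).symm
    _ ≤ {j : ℕ | j < g a ∧ hookLen g a j ≤ k}.ncard := Set.ncard_le_ncard hsub hfinBg
    _ = rowCount k g a := (rowCount_eq_ncard k g a).symm

private lemma lBrow {k : ℕ} {d g : ℕ → ℕ} (hd : IsPartitionFun d) (hg : IsPartitionFun g)
    (hgc : IsCore (k + 1) g) (hhor : HorizRibbons g d) {i : ℕ}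
    (htop : ∀ a, i < a → g a = d a) (hi : d i < g i) (hk : 1 ≤ k) :
    rowCount k d i + 1 ≤ rowCount k g i := by
  set r := g i - d i with hr
  have hr1 : 1 ≤ r := by omega
  have hsub : (fun j => j + (r - 1)) '' {j : ℕ | j < d i ∧ hookLen d i j ≤ k}
      ⊆ {j : ℕ | j < g i ∧ hookLen g i j ≤ k} := by
    rintro x ⟨j, ⟨hj1, hj2⟩, rfl⟩
    have hx1 : j + (r - 1) < g i := by omega
    refine ⟨hx1, ?_⟩
    show hookLen g i (j + (r - 1)) ≤ k
    by_cases hcase : j + (r - 1) < d i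
    · have hmono := lMono hd (Nat.le_add_right j (r - 1)) hcase
      have hed := lHook hd hcase
      have heg := lHook hg hx1
      have hc3 := lC3 hhor hd hg htop hcase
      have hne : hookLen g i (j + (r - 1)) ≠ k + 1 := hgc i _ hx1
      omega
    · push_neg at hcase
      exact lNewHook hhor hd hg hgc hcase hx1
  have htopcell : (g i - 1) ∈ {j : ℕ | j < g i ∧ hookLen g i j ≤ k} := by
    have h1 : d i ≤ g i - 1 := by omega
    have h2 : g i - 1 < g i := by omega
    have hc := lNewcol hhor hd hg h1 h2
    have he := lHook hg h2
    exact ⟨h2, by omega⟩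
  have hnm : (g i - 1) ∉ (fun j => j + (r - 1)) '' {j : ℕ | j < d i ∧ hookLen d i j ≤ k} := by
    rintro ⟨j, ⟨hj1, _⟩, hjx⟩
    simp only at hjx
    omega
  have hfinBg : {j : ℕ | j < g i ∧ hookLen g i j ≤ k}.Finite :=
    (Set.finite_Iio (g i)).subset fun x hx => hx.1
  have hfinIm : ((fun j => j + (r - 1)) '' {j : ℕ | j < d i ∧ hookLen d i j ≤ k}).Finite :=
    hfinBg.subset hsub
  have hins : insert (g i - 1) ((fun j => j + (r - 1)) '' {j : ℕ | j < d i ∧ hookLen d i j ≤ k})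
      ⊆ {j : ℕ | j < g i ∧ hookLen g i j ≤ k} := by
    rw [Set.insert_subset_iff]
    exact ⟨htopcell, hsub⟩
  calc rowCount k d i + 1 = {j : ℕ | j < d i ∧ hookLen d i j ≤ k}.ncard + 1 := by
        rw [rowCount_eq_ncard]
    _ = ((fun j => j + (r - 1)) '' {j : ℕ | j < d i ∧ hookLen d i j ≤ k}).ncard + 1 := by
        rw [Set.ncard_image_of_injective _ (add_left_injective (r - 1))]
    _ = (insert (g i - 1)
          ((fun j => j + (r - 1)) '' {j : ℕ | j < d i ∧ hookLen d i j ≤ k})).ncard :=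
        (Set.ncard_insert_of_notMem hnm hfinIm).symm
    _ ≤ {j : ℕ | j < g i ∧ hookLen g i j ≤ k}.ncard := Set.ncard_le_ncard hins hfinBg
    _ = rowCount k g i := (rowCount_eq_ncard k g i).symm

private lemma lSum (k : ℕ) (f : ℕ → ℕ) (N M : ℕ) (hN : ∀ a, N ≤ a → f a = 0)
    (hM : ∀ a, f a < M) :
    kBoundedCount k f = ∑ a ∈ Finset.range N, rowCount k f a := by
  classical
  set T : Finset (ℕ × ℕ) := (Finset.range N ×ˢ Finset.range M).filter
    (fun p => p.2 < f p.1 ∧ hookLen f p.1 p.2 ≤ k) with hT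
  have hset : {p : ℕ × ℕ | p.2 < f p.1 ∧ hookLen f p.1 p.2 ≤ k} = ↑T := by
    ext ⟨a, b⟩
    simp only [hT, Set.mem_setOf_eq, Finset.coe_filter, Finset.mem_product, Finset.mem_range]
    constructor
    · rintro ⟨h1, h2⟩
      refine ⟨⟨?_, ?_⟩, h1, h2⟩
      · by_contra h
        push_neg at h
        have := hN a h
        omega
      · have := hM a
        omega
    · rintro ⟨_, h⟩
      exact h
  have h1 : kBoundedCount k f = T.card := by
    rw [kBoundedCount, Nat.card_coe_set_eq, hset, Set.ncard_coe_finset]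
  have hmemh : ∀ p ∈ T, p.1 ∈ Finset.range N := by
    intro p hp
    simp only [hT, Finset.mem_filter, Finset.mem_product, Finset.mem_range] at hp
    exact Finset.mem_range.mpr hp.1.1
  have h2 : T.card = ∑ a ∈ Finset.range N, (T.filter fun p => p.1 = a).card :=
    Finset.card_eq_sum_card_fiberwise hmemh
  rw [h1, h2]
  refine Finset.sum_congr rfl fun a ha => ?_
  have hrowset : {j : ℕ | j < f a ∧ hookLen f a j ≤ k} =
      ↑((Finset.range M).filter fun j => j < f a ∧ hookLen f a j ≤ k) := by
    ext j
    simp only [Set.mem_setOf_eq, Finset.coe_filter, Finset.mem_range]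
    constructor
    · rintro ⟨h1', h2'⟩
      exact ⟨by have := hM a; omega, h1', h2'⟩
    · rintro ⟨_, h⟩
      exact h
  rw [rowCount_eq_ncard, hrowset, Set.ncard_coe_finset]
  refine Finset.card_bij' (fun p _ => p.2) (fun j _ => (a, j)) ?_ ?_ ?_ ?_
  · intro p hp
    simp only [hT, Finset.mem_filter, Finset.mem_product, Finset.mem_range] at hp ⊢
    obtain ⟨⟨⟨_, hb⟩, hc⟩, hpa⟩ := hp
    rw [hpa] at hc
    exact ⟨hb, hc⟩
  · intro j hj
    simp only [Finset.mem_filter, Finset.mem_range] at hj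
    simp only [hT, Finset.mem_filter, Finset.mem_product, Finset.mem_range]
    exact ⟨⟨⟨Finset.mem_range.mp ha, hj.1⟩, hj.2⟩, trivial⟩
  · intro p hp
    simp only [hT, Finset.mem_filter] at hp
    exact Prod.ext hp.2.symm rfl
  · intro j hj
    rfl

/-- if `γ/δ` is a union of horizontal ribbons, the highest in row `i`,
and `γ` has one more `k`-bounded cell, then `𝔭(γ) = 𝔭(δ) + e_i`. -/
theorem horiz_ribbons_pmap (k : ℕ) (d g : ℕ → ℕ)
    (hd : IsPartitionFun d ∧ IsCore (k + 1) d) (hg : IsPartitionFun g ∧ IsCore (k + 1) g)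
    (hcnt : kBoundedCount k g = kBoundedCount k d + 1)
    (hhor : HorizRibbons g d) (i : ℕ) (hi : d i < g i) (htop : ∀ a, i < a → g a = d a) :
    ∀ j, pmapFun k g j = pmapFun k d j + (if j = i then 1 else 0) := by
  intro j
  obtain ⟨hdp, hdc⟩ := hd
  obtain ⟨hgp, hgc⟩ := hg
  rcases Nat.eq_zero_or_pos k with hk0 | hk
  · exfalso
    subst hk0
    have hzg : kBoundedCount 0 g = 0 := by
      have h : {p : ℕ × ℕ | p.2 < g p.1 ∧ hookLen g p.1 p.2 ≤ 0} = ∅ := by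
        ext ⟨a, b⟩
        simp only [Set.mem_setOf_eq, Set.mem_empty_iff_false, iff_false, not_and]
        intro hb
        have := lHookPos hgp hb
        omega
      rw [kBoundedCount, h]
      simp
    rw [hzg] at hcnt
    omega
  · obtain ⟨N, hN0⟩ := hgp.2
    have hNg : ∀ a, N ≤ a → g a = 0 := fun a ha => by
      have := hgp.1 ha
      omega
    have hNd : ∀ a, N ≤ a → d a = 0 := fun a ha => by
      have := hhor.1 a
      have := hNg a ha
      omega
    have hMg : ∀ a, g a < g 0 + 1 := fun a => by
      have := hgp.1 (Nat.zero_le a)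
      omega
    have hMd : ∀ a, d a < g 0 + 1 := fun a => by
      have := hhor.1 a
      have := hMg a
      omega
    have hiN : i < N := by
      by_contra h
      push_neg at h
      have := hNg i h
      omega
    have hsg := lSum k g N (g 0 + 1) hNg hMg
    have hsd := lSum k d N (g 0 + 1) hNd hMd
    have hsum : ∑ a ∈ Finset.range N, rowCount k g a
        = (∑ a ∈ Finset.range N, rowCount k d a) + 1 := by
      rw [← hsg, ← hsd]
      exact hcnt
    have hpoint : ∀ a ∈ Finset.range N,
        rowCount k d a + (if a = i then 1 else 0) ≤ rowCount k g a := by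
      intro a _
      by_cases hai : a = i
      · subst hai
        simpa using lBrow hdp hgp hgc hhor htop hi hk
      · simpa [hai] using lArow hdp hgp hgc hhor a
    have hsum2 : ∑ a ∈ Finset.range N, (rowCount k d a + (if a = i then 1 else 0))
        = ∑ a ∈ Finset.range N, rowCount k g a := by
      rw [Finset.sum_add_distrib, hsum, Finset.sum_ite_eq' (Finset.range N) i (fun _ => 1)]
      simp [hiN]
    have heq := (Finset.sum_eq_sum_iff_of_le hpoint).mp hsum2
    by_cases hjN : j < N
    · exact (heq j (Finset.mem_range.mpr hjN)).symm
    · push_neg at hjN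
      have hgj : g j = 0 := hNg j hjN
      have hdj : d j = 0 := hNd j hjN
      have hji : j ≠ i := by omega
      show rowCount k g j = rowCount k d j + _
      rw [lRowZero k hgj, lRowZero k hdj, if_neg hji]

end

end KSchur
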